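/- The set S := {(μ, γ, e, w) ∈ ℝ × ℝ^k × E × W : there exists z ∈ Z with a(z) + α < μ, b_j(z) + β_j < γ_j for all j = 1,…,k, T_E(z) + e₀ = e, and T_W(z) + w₀ − w ∈ cone(int K − g₀)} is convex and open in ℝ × ℝ^k × E × W. -/

import Mathlib

/-- The cone generated by `S - x`. -/
def coneOf {W : Type*} [AddCommGroup W] [Module ℝ W] (S : Set W) (x : W) : Set W :=
  {w | ∃ t : ℝ, 0 < t ∧ ∃ s ∈ S, w = t • (s - x)}

lemma combo_lt {x₁ x₂ y₁ y₂ aa bb : ℝ} (h₁ : x₁ < y₁) (h₂ : x₂ < y₂)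
    (ha : 0 ≤ aa) (hb : 0 ≤ bb) (hab : aa + bb = 1) :
    aa * x₁ + bb * x₂ < aa * y₁ + bb * y₂ := by
  rcases ha.lt_or_eq with h | h
  · have h1 : aa * x₁ < aa * y₁ := by nlinarith
    have h2 : bb * x₂ ≤ bb * y₂ := by nlinarith
    linarith
  · have hb1 : bb = 1 := by linarith
    simp [← h, hb1, h₂]

lemma coneOf_convex {W : Type*} [AddCommGroup W] [Module ℝ W] {S : Set W}
    (hS : Convex ℝ S) (x : W) : Convex ℝ (coneOf S x) := by
  rintro p ⟨t, ht, s, hs, rfl⟩ q ⟨u, hu, r, hr, rfl⟩ aa bb ha hb hab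
  have hT : 0 < aa * t + bb * u := by
    rcases ha.lt_or_eq with h | h
    · have : 0 < aa * t := mul_pos h ht
      nlinarith [mul_nonneg hb hu.le]
    · have hb1 : bb = 1 := by linarith
      simp [← h, hb1, hu]
  refine ⟨aa * t + bb * u, hT, (aa * t / (aa * t + bb * u)) • s + (bb * u / (aa * t + bb * u)) • r,
    hS hs hr (by positivity) (by positivity) (by field_simp), ?_⟩
  have hT0 : (aa * t + bb * u) ≠ 0 := hT.ne'
  match_scalars <;> field_simp <;> ring

lemma isOpen_coneOf {W : Type*} [NormedAddCommGroup W] [NormedSpace ℝ W] {S : Set W}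
    (hS : IsOpen S) (x : W) : IsOpen (coneOf S x) := by
  rw [Metric.isOpen_iff]
  rintro y ⟨t, ht, s, hs, rfl⟩
  obtain ⟨ε, hε, hball⟩ := Metric.isOpen_iff.1 hS s hs
  refine ⟨t * ε, by positivity, fun v hv => ?_⟩
  refine ⟨t, ht, s + t⁻¹ • (v - t • (s - x)), hball ?_, ?_⟩
  · rw [Metric.mem_ball, dist_eq_norm] at hv ⊢
    have : ‖s + t⁻¹ • (v - t • (s - x)) - s‖ = t⁻¹ * ‖v - t • (s - x)‖ := by
      rw [add_sub_cancel_left, norm_smul, Real.norm_eq_abs, abs_of_pos (by positivity)]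
    rw [this]
    calc t⁻¹ * ‖v - t • (s - x)‖ < t⁻¹ * (t * ε) := by
          exact mul_lt_mul_of_pos_left hv (by positivity)
      _ = ε := by field_simp
  · have ht0 : t ≠ 0 := ht.ne'
    match_scalars <;> field_simp <;> ring

/-- The auxiliary set `S` appearing in the separation argument. -/
def auxSet {Z E W : Type*}
    [NormedAddCommGroup Z] [NormedSpace ℝ Z]
    [NormedAddCommGroup E] [NormedSpace ℝ E]
    [NormedAddCommGroup W] [NormedSpace ℝ W]
    (k : ℕ) (a : Z →L[ℝ] ℝ) (b : Fin k → Z →L[ℝ] ℝ)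
    (TE : Z →L[ℝ] E) (TW : Z →L[ℝ] W)
    (α : ℝ) (β : Fin k → ℝ) (e₀ : E) (w₀ : W)
    (K : Set W) (g₀ : W) : Set (ℝ × (Fin k → ℝ) × E × W) :=
  {p | ∃ z : Z,
    a z + α < p.1 ∧
    (∀ j, b j z + β j < p.2.1 j) ∧
    TE z + e₀ = p.2.2.1 ∧
    TW z + w₀ - p.2.2.2 ∈ coneOf (interior K) g₀}

/-- The auxiliary set `S` is convex and open. -/
theorem auxSet_convex_and_open
    {Z E W : Type*}
    [NormedAddCommGroup Z] [NormedSpace ℝ Z] [CompleteSpace Z]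
    [NormedAddCommGroup E] [NormedSpace ℝ E] [CompleteSpace E]
    [NormedAddCommGroup W] [NormedSpace ℝ W] [CompleteSpace W]
    (k : ℕ) (a : Z →L[ℝ] ℝ) (b : Fin k → Z →L[ℝ] ℝ)
    (TE : Z →L[ℝ] E) (hTE : Function.Surjective ⇑TE)
    (TW : Z →L[ℝ] W)
    (α : ℝ) (β : Fin k → ℝ) (e₀ : E) (w₀ : W)
    (K : Set W) (hKconv : Convex ℝ K) (hKint : (interior K).Nonempty)
    (g₀ : W) (hg₀ : g₀ ∈ K) :
    Convex ℝ (auxSet k a b TE TW α β e₀ w₀ K g₀) ∧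
    IsOpen (auxSet k a b TE TW α β e₀ w₀ K g₀) := by
  have hCconv : Convex ℝ (coneOf (interior K) g₀) :=
    coneOf_convex (hKconv.interior) g₀
  have hCopen : IsOpen (coneOf (interior K) g₀) := isOpen_coneOf isOpen_interior g₀
  constructor
  · -- convexity
    rintro p ⟨z₁, hz1a, hz1b, hz1e, hz1w⟩ q ⟨z₂, hz2a, hz2b, hz2e, hz2w⟩ aa bb ha hb hab
    refine ⟨aa • z₁ + bb • z₂, ?_, ?_, ?_, ?_⟩
    · have : a (aa • z₁ + bb • z₂) + α = aa * (a z₁ + α) + bb * (a z₂ + α) := by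
        simp only [map_add, map_smul, smul_eq_mul]
        linear_combination (-α) * hab
      have h1 : (aa • p + bb • q).1 = aa * p.1 + bb * q.1 := rfl
      rw [this, h1]
      exact combo_lt hz1a hz2a ha hb hab
    · intro j
      have : (b j) (aa • z₁ + bb • z₂) + β j = aa * ((b j) z₁ + β j) + bb * ((b j) z₂ + β j) := by
        simp only [map_add, map_smul, smul_eq_mul]
        linear_combination (-(β j)) * hab
      have h2 : (aa • p + bb • q).2.1 j = aa * p.2.1 j + bb * q.2.1 j := by
        simp [Prod.smul_snd, Prod.smul_fst]
      rw [this, h2]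
      exact combo_lt (hz1b j) (hz2b j) ha hb hab
    · show TE (aa • z₁ + bb • z₂) + e₀ = aa • p.2.2.1 + bb • q.2.2.1
      rw [← hz1e, ← hz2e]
      simp only [map_add, map_smul, smul_add]
      match_scalars <;> linarith
    · have key : TW (aa • z₁ + bb • z₂) + w₀ - (aa • p + bb • q).2.2.2
          = aa • (TW z₁ + w₀ - p.2.2.2) + bb • (TW z₂ + w₀ - q.2.2.2) := by
        show TW (aa • z₁ + bb • z₂) + w₀ - (aa • p.2.2.2 + bb • q.2.2.2) = _
        simp only [map_add, map_smul, smul_sub, smul_add]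
        match_scalars <;> linarith
      rw [key]
      exact hCconv hz1w hz2w ha hb hab
  · -- openness
    set L : (ℝ × (Fin k → ℝ) × Z × W) →L[ℝ] (ℝ × (Fin k → ℝ) × E × W) :=
      (ContinuousLinearMap.id ℝ ℝ).prodMap
        ((ContinuousLinearMap.id ℝ (Fin k → ℝ)).prodMap
          (TE.prodMap (ContinuousLinearMap.id ℝ W))) with hL
    have hLsurj : Function.Surjective ⇑L := by
      rintro ⟨μ, γ, e, w⟩
      obtain ⟨z, hz⟩ := hTE e
      exact ⟨(μ, γ, z, w), by simp [hL, hz]⟩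
    have hLopen : IsOpenMap ⇑L := L.isOpenMap hLsurj
    set O : Set (ℝ × (Fin k → ℝ) × Z × W) :=
      {q | a q.2.2.1 + α < q.1 ∧ (∀ j, b j q.2.2.1 + β j < q.2.1 j) ∧
        TW q.2.2.1 + w₀ - q.2.2.2 ∈ coneOf (interior K) g₀} with hO
    have hOopen : IsOpen O := by
      have h1 : IsOpen {q : ℝ × (Fin k → ℝ) × Z × W | a q.2.2.1 + α < q.1} :=
        isOpen_lt (by fun_prop) (by fun_prop)
      have h2 : IsOpen {q : ℝ × (Fin k → ℝ) × Z × W | ∀ j, b j q.2.2.1 + β j < q.2.1 j} := by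
        rw [Set.setOf_forall]
        exact isOpen_iInter_of_finite fun j => isOpen_lt (by fun_prop) (by fun_prop)
      have h3 : IsOpen {q : ℝ × (Fin k → ℝ) × Z × W |
          TW q.2.2.1 + w₀ - q.2.2.2 ∈ coneOf (interior K) g₀} :=
        hCopen.preimage (by fun_prop)
      exact h1.inter (h2.inter h3)
    have hset : auxSet k a b TE TW α β e₀ w₀ K g₀
        = (· + ((0 : ℝ), (0 : Fin k → ℝ), e₀, (0 : W))) '' (L '' O) := by
      ext p
      constructor
      · rintro ⟨z, h1, h2, h3, h4⟩
        refine ⟨(p.1, p.2.1, TE z, p.2.2.2), ⟨⟨p.1, p.2.1, z, p.2.2.2⟩, ⟨h1, h2, h4⟩, by simp [hL]⟩, ?_⟩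
        simp [Prod.ext_iff, ← h3]
      · rintro ⟨_, ⟨⟨μ, γ, z, w⟩, ⟨h1, h2, h4⟩, rfl⟩, rfl⟩
        refine ⟨z, by simpa [hL] using h1, by simpa [hL] using h2, by simp [hL], by simpa [hL] using h4⟩
    rw [hset]
    exact (Homeomorph.addRight _).isOpenMap _ (hLopen _ hOopen)
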